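/- Euler–Maclaurin formula: let M, N ∈ ℤ with M < N, let k ≥ 1, and let g : ℝ → ℝ be 2k-times continuously differentiable on the interval [M, N]. Then Σ_{ν=M}^{N} g(ν) = ∫_M^N g(x) dx + (1/2)(g(M) + g(N)) + Σ_{j=1}^{k} (B_{2j}/(2j)!)·(g^{(2j−1)}(N) − g^{(2j−1)}(M)) + R_k(g), where R_k(g) = −(1/(2k)!)·∫_M^N B_{2k}(x − ⌊x⌋)·g^{(2k)}(x) dx. -/

import Mathlib

open scoped Nat

open Polynomial MeasureTheory Set intervalIntegral

noncomputable def emB (r : ℕ) : Polynomial ℝ := (Polynomial.bernoulli r).map (algebraMap ℚ ℝ)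

lemma emB_deriv (r : ℕ) (a x : ℝ) :
    HasDerivAt (fun y => Polynomial.eval (y - a) (emB (r+1))) ((r+1) * Polynomial.eval (x - a) (emB r)) x := by
  have h1 : HasDerivAt (fun y : ℝ => y - a) 1 x := (hasDerivAt_id x).sub_const a
  have h3 := ((emB (r+1)).hasDerivAt (x - a)).comp x h1
  simp only [mul_one] at h3
  have h4 : HasDerivAt (fun y => Polynomial.eval (y - a) (emB (r+1)))
      (Polynomial.eval (x - a) (Polynomial.derivative (emB (r+1)))) x := h3
  convert h4 using 1
  simp only [emB, Polynomial.derivative_map, Polynomial.derivative_bernoulli_add_one]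
  push_cast
  simp [Polynomial.eval_map, Polynomial.eval₂_mul]

lemma emB_cont (r : ℕ) (a : ℝ) : Continuous (fun y => Polynomial.eval (y - a) (emB r)) :=
  (emB r).continuous.comp (continuous_id.sub continuous_const)

lemma emB_eval_zero (r : ℕ) : Polynomial.eval (0:ℝ) (emB r) = ((bernoulli r : ℚ) : ℝ) := by
  rw [emB, Polynomial.eval_zero_map, Polynomial.bernoulli_eval_zero]; simp

lemma emB_eval_one (r : ℕ) : Polynomial.eval (1:ℝ) (emB r) = ((bernoulli' r : ℚ) : ℝ) := by
  rw [emB, Polynomial.eval_one_map, Polynomial.bernoulli_eval_one]; simp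

lemma em_ibp (a : ℝ) (r : ℕ) (f f' : ℝ → ℝ)
    (hf : ContinuousOn f (Icc a (a+1)))
    (hf' : ContinuousOn f' (Icc a (a+1)))
    (hd : ∀ x ∈ Ioo a (a+1), HasDerivAt f (f' x) x) :
    ∫ x in a..(a+1), Polynomial.eval (x - a) (emB (r+1)) * f' x
      = Polynomial.eval 1 (emB (r+1)) * f (a+1)
        - Polynomial.eval 0 (emB (r+1)) * f a
        - (r+1) * ∫ x in a..(a+1), Polynomial.eval (x - a) (emB r) * f x := by
  have hle : a ≤ a + 1 := by linarith
  have hint1 : IntervalIntegrable (fun x => Polynomial.eval (x - a) (emB r) * f x) volume a (a+1) := by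
    apply ContinuousOn.intervalIntegrable
    rw [uIcc_of_le hle]
    exact ((emB_cont r a).continuousOn).mul hf
  have hint2 : IntervalIntegrable (fun x => Polynomial.eval (x - a) (emB (r+1)) * f' x) volume a (a+1) := by
    apply ContinuousOn.intervalIntegrable
    rw [uIcc_of_le hle]
    exact ((emB_cont (r+1) a).continuousOn).mul hf'
  have h1 : ContinuousOn (fun x => Polynomial.eval (x - a) (emB (r+1)) * f x) (Icc a (a+1)) :=
    ((emB_cont (r+1) a).continuousOn).mul hf
  have h2 : ∀ x ∈ Ioo a (a+1), HasDerivWithinAt (fun x => Polynomial.eval (x - a) (emB (r+1)) * f x)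
      ((fun x => ((r:ℝ)+1) * Polynomial.eval (x - a) (emB r) * f x
        + Polynomial.eval (x - a) (emB (r+1)) * f' x) x) (Ioi x) x := by
    intro x hx
    exact ((emB_deriv r a x).mul (hd x hx)).hasDerivWithinAt
  have h3 : IntervalIntegrable (fun x => ((r:ℝ)+1) * Polynomial.eval (x - a) (emB r) * f x
      + Polynomial.eval (x - a) (emB (r+1)) * f' x) volume a (a+1) := by
    apply ContinuousOn.intervalIntegrable
    rw [uIcc_of_le hle]
    exact ((continuous_const.mul (emB_cont r a)).continuousOn.mul hf).add
      (((emB_cont (r+1) a)).continuousOn.mul hf')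
  have key := integral_eq_sub_of_hasDeriv_right_of_le hle h1 h2 h3
  simp only [mul_assoc] at key
  rw [intervalIntegral.integral_add (hint1.const_mul _) hint2,
    intervalIntegral.integral_const_mul] at key
  simp only [add_sub_cancel_left, sub_self] at key
  push_cast
  linarith [key]

lemma em_interval (M N : ℝ) (k : ℕ) (hk : 1 ≤ k) (g : ℝ → ℝ) (hMN : M < N)
    (hg : ContDiffOn ℝ (2*k) g (Icc M N))
    (a : ℝ) (haM : M ≤ a) (haN : a + 1 ≤ N) :
    (1/2) * (g a + g (a+1)) =
      (∫ x in a..(a+1), g x)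
      + (∑ j ∈ Finset.Icc 1 k, (((bernoulli (2*j) : ℚ) : ℝ) / ((2*j)! : ℝ)) *
          (iteratedDerivWithin (2*j-1) g (Icc M N) (a+1) - iteratedDerivWithin (2*j-1) g (Icc M N) a))
      - (1/((2*k)! : ℝ)) * ∫ x in a..(a+1),
          Polynomial.eval (x - a) (emB (2*k)) * iteratedDerivWithin (2*k) g (Icc M N) x := by
  have hs : UniqueDiffOn ℝ (Icc M N) := uniqueDiffOn_Icc hMN
  have hsub : Icc a (a+1) ⊆ Icc M N := Icc_subset_Icc haM haN
  set f : ℕ → ℝ → ℝ := fun r => iteratedDerivWithin r g (Icc M N) with hfdef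
  have hfc : ∀ r, r ≤ 2*k → ContinuousOn (f r) (Icc a (a+1)) := by
    intro r hr
    exact (hg.continuousOn_iteratedDerivWithin (by exact_mod_cast hr) hs).mono hsub
  have hfd : ∀ r, r < 2*k → ∀ x ∈ Ioo a (a+1), HasDerivAt (f r) (f (r+1) x) x := by
    intro r hr x hx
    have hxs : x ∈ Icc M N := hsub (Ioo_subset_Icc_self hx)
    have hdiff : DifferentiableWithinAt ℝ (f r) (Icc M N) x :=
      (hg.differentiableOn_iteratedDerivWithin (by exact_mod_cast hr) hs) x hxs
    have hmem : Icc M N ∈ nhds x :=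
      Icc_mem_nhds (lt_of_le_of_lt haM hx.1) (lt_of_lt_of_le hx.2 haN)
    have h2 : HasDerivAt (f r) (derivWithin (f r) (Icc M N) x) x :=
      hdiff.hasDerivWithinAt.hasDerivAt hmem
    have h3 : f (r+1) x = derivWithin (f r) (Icc M N) x := by
      simp only [hfdef]
      rw [iteratedDerivWithin_succ]
    rw [h3]
    exact h2
  set J : ℕ → ℝ := fun r => ∫ x in a..(a+1), Polynomial.eval (x - a) (emB r) * f r x with hJdef
  have step : ∀ r : ℕ, r + 1 ≤ 2*k →
      J (r+1) = Polynomial.eval 1 (emB (r+1)) * f r (a+1)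
        - Polynomial.eval 0 (emB (r+1)) * f r a - (r+1) * J r := by
    intro r hr
    simp only [hJdef]
    exact em_ibp a r (f r) (f (r+1)) (hfc r (by omega)) (hfc (r+1) hr) (hfd r (by omega))
  set K : ℕ → ℝ := fun r => (1/(r ! : ℝ)) * J r with hKdef
  have Krec : ∀ r : ℕ, 1 ≤ r → r + 1 ≤ 2*k →
      K r = ((bernoulli (r+1) : ℚ) : ℝ)/(((r+1)! : ℕ) : ℝ) * (f r (a+1) - f r a) - K (r+1) := by
    intro r h1 h2
    have hb : Polynomial.eval (1:ℝ) (emB (r+1)) = ((bernoulli (r+1):ℚ):ℝ) := by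
      rw [emB_eval_one, bernoulli_eq_bernoulli'_of_ne_one (by omega)]
    have hst := step r h2
    rw [hb, emB_eval_zero] at hst
    simp only [hKdef]
    have hfact : (((r+1)! : ℕ) : ℝ) = ((r:ℝ)+1) * ((r ! : ℕ) : ℝ) := by
      rw [Nat.factorial_succ]; push_cast; ring
    have hr1 : ((r:ℝ)+1) ≠ 0 := by positivity
    have hrf : ((r ! : ℕ) : ℝ) ≠ 0 := by
      exact_mod_cast (Nat.factorial_pos r).ne'
    rw [hfact, hst]
    field_simp
    ring
  have main : ∀ m : ℕ, 1 ≤ m → m ≤ k →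
      K 1 = (∑ j ∈ Finset.Icc 1 m, (((bernoulli (2*j) : ℚ) : ℝ) / ((2*j)! : ℝ)) *
          (f (2*j-1) (a+1) - f (2*j-1) a)) - K (2*m) := by
    intro m hm
    induction m, hm using Nat.le_induction with
    | base =>
      intro hmk
      have := Krec 1 le_rfl (by omega)
      simpa using this
    | succ m hm ih =>
      intro hmk
      have e1 := Krec (2*m) (by omega) (by omega)
      have e2 := Krec (2*m+1) (by omega) (by omega)
      have hodd : _root_.bernoulli (2*m+1) = 0 := by
        rw [bernoulli_eq_bernoulli'_of_ne_one (by omega)]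
        exact bernoulli'_eq_zero_of_odd ⟨m, by omega⟩ (by omega)
      rw [hodd] at e1
      simp only [Rat.cast_zero, zero_div, zero_mul, zero_sub] at e1
      rw [Finset.sum_Icc_succ_top (by omega : 1 ≤ m + 1)]
      rw [ih (by omega)]
      have i1 : 2*(m+1) = 2*m+1+1 := by omega
      rw [i1]
      simp only [Nat.add_sub_cancel]
      linarith [e1, e2]
  have hJ1 := step 0 (by omega)
  have hf0 : ∀ x, f 0 x = g x := by intro x; simp [hfdef]
  have hJ0 : J 0 = ∫ x in a..(a+1), g x := by
    simp only [hJdef, hf0]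
    congr 1
    ext x
    simp [emB, Polynomial.bernoulli_zero]
  have hev1 : Polynomial.eval (1:ℝ) (emB 1) = 1/2 := by
    rw [emB_eval_one, bernoulli'_one]; norm_num
  have hev0 : Polynomial.eval (0:ℝ) (emB 1) = -(1/2) := by
    rw [emB_eval_zero, _root_.bernoulli_one]; norm_num
  rw [hev1, hev0, hJ0, hf0, hf0] at hJ1
  have hK1 : K 1 = J 1 := by simp [hKdef]
  have hK2k : K (2*k) = (1/(((2*k)! : ℕ) : ℝ)) * ∫ x in a..(a+1),
      Polynomial.eval (x - a) (emB (2*k)) * f (2*k) x := by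
    simp only [hKdef, hJdef]
  have hmain := main k hk le_rfl
  rw [hK1] at hmain
  linarith [hJ1, hmain, hK2k]

lemma em_sum_Icc_int (F : ℤ → ℝ) (M : ℤ) (d : ℕ) :
    ∑ ν ∈ Finset.Icc M (M + (d:ℤ)), F ν = ∑ i ∈ Finset.range (d+1), F (M + (i:ℤ)) := by
  induction d with
  | zero => simp
  | succ d ih =>
    have h1 : Finset.Icc M (M + ((d+1 : ℕ):ℤ)) = insert (M + ((d+1:ℕ):ℤ)) (Finset.Icc M (M + (d:ℤ))) := by
      ext x
      simp only [Finset.mem_Icc, Finset.mem_insert]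
      push_cast
      omega
    rw [h1, Finset.sum_insert (by simp only [Finset.mem_Icc]; push_cast; omega), ih,
      Finset.sum_range_succ _ (d+1)]
    push_cast
    ring

/-- the Euler–Maclaurin formula. For `M < N` integers, `k ≥ 1`, and
`g` a `2k`-times continuously differentiable function on `[M, N]`:
`Σ_{ν=M}^N g(ν) = ∫_M^N g + (1/2)(g(M)+g(N))
  + Σ_{j=1}^k (B_{2j}/(2j)!)·(g^{(2j-1)}(N) - g^{(2j-1)}(M)) + R_k(g)`,
with `R_k(g) = -(1/(2k)!)·∫_M^N B_{2k}(x-⌊x⌋)·g^{(2k)}(x) dx`.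
Here `B_m(x)` is the Bernoulli polynomial, `B_m = B_m(0)` the Bernoulli number,
and derivatives are taken within `[M, N]`. -/
theorem euler_maclaurin
    (M N : ℤ) (hMN : M < N) (k : ℕ) (hk : 1 ≤ k) (g : ℝ → ℝ)
    (hg : ContDiffOn ℝ (2 * k) g (Set.Icc (M : ℝ) (N : ℝ))) :
    ∑ ν ∈ Finset.Icc M N, g (ν : ℝ) =
      (∫ x in (M : ℝ)..(N : ℝ), g x) + (1 / 2) * (g (M : ℝ) + g (N : ℝ)) +
        (∑ j ∈ Finset.Icc 1 k,
          (((bernoulli (2 * j) : ℚ) : ℝ) / (Nat.factorial (2 * j) : ℝ)) *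
            (iteratedDerivWithin (2 * j - 1) g (Set.Icc (M : ℝ) (N : ℝ)) (N : ℝ) -
              iteratedDerivWithin (2 * j - 1) g (Set.Icc (M : ℝ) (N : ℝ)) (M : ℝ))) +
        (-(1 / (Nat.factorial (2 * k) : ℝ)) *
          ∫ x in (M : ℝ)..(N : ℝ),
            (Polynomial.eval (x - (⌊x⌋ : ℝ))
                ((Polynomial.bernoulli (2 * k)).map (algebraMap ℚ ℝ))) *
              iteratedDerivWithin (2 * k) g (Set.Icc (M : ℝ) (N : ℝ)) x) := by
  have hMNR : (M:ℝ) < (N:ℝ) := by exact_mod_cast hMN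
  set d : ℕ := (N - M).toNat with hddef
  have hdZ : (d:ℤ) = N - M := Int.toNat_of_nonneg (by omega)
  have hd1 : 1 ≤ d := by omega
  have hdR : (M:ℝ) + (d:ℕ) = (N:ℝ) := by
    have : ((d:ℤ):ℝ) = ((N - M : ℤ):ℝ) := by exact_mod_cast congrArg (Int.cast : ℤ → ℝ) hdZ
    push_cast at this ⊢
    linarith
  set s : Set ℝ := Set.Icc (M:ℝ) (N:ℝ) with hsdef
  set f : ℕ → ℝ → ℝ := fun r => iteratedDerivWithin r g s with hfdef
  set a : ℕ → ℝ := fun i => (M:ℝ) + i with hadef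
  have ha0 : a 0 = (M:ℝ) := by simp [hadef]
  have had : a d = (N:ℝ) := by simp [hadef, hdR]
  have hasucc : ∀ i, a (i+1) = a i + 1 := by intro i; simp only [hadef]; push_cast; ring
  have haM : ∀ i, (M:ℝ) ≤ a i := by
    intro i
    have h0 : (0:ℝ) ≤ (i:ℝ) := Nat.cast_nonneg i
    simp only [hadef]
    linarith
  have haN : ∀ i, i < d → a i + 1 ≤ (N:ℝ) := by
    intro i hi
    have : a i + 1 ≤ a d := by
      rw [hadef]
      simp only
      have : ((i:ℝ)+1) ≤ (d:ℝ) := by exact_mod_cast Nat.succ_le_of_lt hi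
      linarith
    linarith [had ▸ this]
  have hsubI : ∀ i, i < d → Set.Icc (a i) (a i + 1) ⊆ s := by
    intro i hi
    rw [hsdef]
    exact Set.Icc_subset_Icc (haM i) (haN i hi)
  -- per-interval identity
  have EMI : ∀ i, i < d →
      (1/2) * (g (a i) + g (a i + 1)) =
        (∫ x in (a i)..(a i + 1), g x)
        + (∑ j ∈ Finset.Icc 1 k, (((bernoulli (2*j) : ℚ) : ℝ) / ((2*j)! : ℝ)) *
            (f (2*j-1) (a i + 1) - f (2*j-1) (a i)))
        - (1/((2*k)! : ℝ)) * ∫ x in (a i)..(a i + 1),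
            Polynomial.eval (x - a i) (emB (2*k)) * f (2*k) x := by
    intro i hi
    exact em_interval (M:ℝ) (N:ℝ) k hk g hMNR hg (a i) (haM i) (haN i hi)
  -- continuity facts
  have huniq : UniqueDiffOn ℝ s := by rw [hsdef]; exact uniqueDiffOn_Icc hMNR
  have hscont : ContinuousOn g s := hg.continuousOn
  have hfcont : ContinuousOn (f (2*k)) s := by
    rw [hfdef]
    exact hg.continuousOn_iteratedDerivWithin (by exact_mod_cast le_rfl) huniq
  -- summed left-hand side
  have hsumL : ∑ i ∈ Finset.range d, (1/2) * (g (a i) + g (a i + 1))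
      = (∑ ν ∈ Finset.Icc M N, g (ν:ℝ)) - (1/2) * (g (M:ℝ) + g (N:ℝ)) := by
    have t1 : ∑ i ∈ Finset.range d, (g (a (i+1)) - g (a i)) = g (a d) - g (a 0) :=
      Finset.sum_range_sub (fun i => g (a i)) d
    have t2 : ∑ ν ∈ Finset.Icc M N, g (ν:ℝ) = ∑ i ∈ Finset.range (d+1), g (a i) := by
      rw [show N = M + (d:ℤ) by omega]
      rw [em_sum_Icc_int (fun ν => g (ν:ℝ)) M d]
      refine Finset.sum_congr rfl (fun i _ => ?_)
      congr 1
      simp only [hadef]; push_cast; ring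
    have t3 : ∑ i ∈ Finset.range (d+1), g (a i)
        = (∑ i ∈ Finset.range d, g (a i)) + g (a d) := Finset.sum_range_succ _ d
    have t4 : ∑ i ∈ Finset.range d, (1/2) * (g (a i) + g (a i + 1))
        = (∑ i ∈ Finset.range d, g (a i))
          + (1/2) * ∑ i ∈ Finset.range d, (g (a (i+1)) - g (a i)) := by
      rw [Finset.mul_sum, ← Finset.sum_add_distrib]
      refine Finset.sum_congr rfl (fun i _ => ?_)
      rw [hasucc i]
      ring
    rw [t4, t1, t2, t3, ha0, had]
    ring
  -- summed integral of g
  have hale : ∀ i : ℕ, a i ≤ a (i+1) := by intro i; rw [hasucc]; linarith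
  have hint_g : ∀ i < d, IntervalIntegrable g volume (a i) (a (i+1)) := by
    intro i hi
    apply ContinuousOn.intervalIntegrable
    rw [uIcc_of_le (hale i), hasucc]
    exact hscont.mono (hsubI i hi)
  have hsumInt : ∑ i ∈ Finset.range d, ∫ x in (a i)..(a i + 1), g x
      = ∫ x in (M:ℝ)..(N:ℝ), g x := by
    rw [← ha0, ← had, ← intervalIntegral.sum_integral_adjacent_intervals hint_g]
    exact Finset.sum_congr rfl (fun i _ => by rw [hasucc])
  -- summed middle terms
  have hsumS : ∑ i ∈ Finset.range d, (∑ j ∈ Finset.Icc 1 k,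
        (((bernoulli (2*j) : ℚ) : ℝ) / ((2*j)! : ℝ)) *
          (f (2*j-1) (a i + 1) - f (2*j-1) (a i)))
      = ∑ j ∈ Finset.Icc 1 k, (((bernoulli (2*j) : ℚ) : ℝ) / ((2*j)! : ℝ)) *
          (f (2*j-1) (N:ℝ) - f (2*j-1) (M:ℝ)) := by
    rw [Finset.sum_comm]
    refine Finset.sum_congr rfl (fun j _ => ?_)
    rw [← Finset.mul_sum]
    congr 1
    calc ∑ i ∈ Finset.range d, (f (2*j-1) (a i + 1) - f (2*j-1) (a i))
        = ∑ i ∈ Finset.range d, (f (2*j-1) (a (i+1)) - f (2*j-1) (a i)) := by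
          refine Finset.sum_congr rfl (fun i _ => by rw [hasucc])
      _ = f (2*j-1) (a d) - f (2*j-1) (a 0) := Finset.sum_range_sub (fun i => f (2*j-1) (a i)) d
      _ = _ := by rw [ha0, had]
  -- the remainder
  set h : ℝ → ℝ := fun x => Polynomial.eval (x - (⌊x⌋:ℝ)) (emB (2*k)) * f (2*k) x with hhdef
  have hcast : ∀ i : ℕ, ((M + (i:ℤ) : ℤ):ℝ) = a i := by
    intro i; simp only [hadef]; push_cast; ring
  have hae : ∀ i < d, ∀ᵐ x ∂(volume : Measure ℝ), x ∈ Set.Ioc (a i) (a i + 1) →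
      h x = Polynomial.eval (x - a i) (emB (2*k)) * f (2*k) x := by
    intro i hi
    have hne : ∀ᵐ x ∂(volume : Measure ℝ), x ∉ ({a i + 1} : Set ℝ) :=
      compl_mem_ae_iff.mpr (measure_singleton _)
    filter_upwards [hne] with x hx hxIoc
    have hxne : x ≠ a i + 1 := by simpa using hx
    have hxlt : x < a i + 1 := lt_of_le_of_ne hxIoc.2 hxne
    have hfl : ⌊x⌋ = M + (i:ℤ) := by
      rw [Int.floor_eq_iff]
      constructor
      · rw [hcast]; exact le_of_lt hxIoc.1
      · have : ((M + (i:ℤ) : ℤ):ℝ) + 1 = a i + 1 := by rw [hcast]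
        push_cast at this ⊢
        linarith [hxlt]
    simp only [hhdef]
    rw [hfl, hcast]
  have hIoc : ∀ i : ℕ, Set.uIoc (a i) (a (i+1)) = Set.Ioc (a i) (a i + 1) := by
    intro i; rw [uIoc_of_le (hale i), hasucc]
  have hinth : ∀ i < d, IntervalIntegrable h volume (a i) (a (i+1)) := by
    intro i hi
    have hcont : IntervalIntegrable
        (fun x => Polynomial.eval (x - a i) (emB (2*k)) * f (2*k) x) volume (a i) (a (i+1)) := by
      apply ContinuousOn.intervalIntegrable
      rw [uIcc_of_le (hale i), hasucc]
      exact ((emB_cont (2*k) (a i)).continuousOn).mul (hfcont.mono (hsubI i hi))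
    apply hcont.congr_ae
    rw [hIoc i]
    exact (ae_restrict_iff' measurableSet_Ioc).mpr
      ((hae i hi).mono (fun x hx h' => (hx h').symm))
  have hsumR : ∑ i ∈ Finset.range d,
        (∫ x in (a i)..(a i + 1), Polynomial.eval (x - a i) (emB (2*k)) * f (2*k) x)
      = ∫ x in (M:ℝ)..(N:ℝ), h x := by
    rw [← ha0, ← had, ← intervalIntegral.sum_integral_adjacent_intervals hinth]
    refine Finset.sum_congr rfl (fun i hi => ?_)
    have hi' : i < d := Finset.mem_range.mp hi
    rw [← hasucc]
    refine (intervalIntegral.integral_congr_ae ?_).symm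
    rw [hIoc i]
    exact hae i hi'
  -- assemble
  have total := Finset.sum_congr rfl (fun i hi => EMI i (Finset.mem_range.mp hi))
  rw [Finset.sum_sub_distrib, Finset.sum_add_distrib, hsumL, hsumInt, hsumS,
    ← Finset.mul_sum, hsumR] at total
  simp only [hfdef] at total
  have hEq : (∫ x in (M:ℝ)..(N:ℝ),
      Polynomial.eval (x - (⌊x⌋:ℝ)) ((Polynomial.bernoulli (2*k)).map (algebraMap ℚ ℝ))
        * iteratedDerivWithin (2*k) g s x) = ∫ x in (M:ℝ)..(N:ℝ), h x := rfl
  rw [hEq]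
  linarith [total]
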